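/- Suppose F is bounded, μ is a finite Borel measure on E invariant under the flow (μ (f t ⁻¹' A) = μ A for every t ∈ ℝ and every Borel set A), and Φ, η : E → ℝ are C¹, bounded, with bounded derivatives. Then ∫ Φ(x) · Dη(x)(F x) dμ(x) = − ∫ η(x) · DΦ(x)(F x) dμ(x); that is, integration by parts along the flow direction holds with respect to any invariant measure. -/

import Mathlib

open MeasureTheory

/-- Trajectories of a flow of a bounded vector field move at bounded speed. -/
lemma flow_traj_bound {E : Type*} [NormedAddCommGroup E] [NormedSpace ℝ E]
    (F : E → E) (f : ℝ → E → E)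
    (hf0 : ∀ x : E, f 0 x = x)
    (hflow : ∀ t : ℝ, ∀ x : E, HasDerivAt (fun τ : ℝ => f τ x) (F (f t x)) t)
    {D : ℝ} (hD : ∀ x : E, ‖F x‖ ≤ D) (x : E) (s : ℝ) :
    ‖f s x - x‖ ≤ D * ‖s‖ := by
  have h := Convex.norm_image_sub_le_of_norm_hasDerivWithin_le
    (f := fun τ : ℝ => f τ x) (f' := fun τ : ℝ => F (f τ x)) (s := Set.univ)
    (fun τ _ => (hflow τ x).hasDerivWithinAt) (fun τ _ => hD _)
    convex_univ (Set.mem_univ 0) (Set.mem_univ s)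
  simpa [hf0 x] using h

/-- The time-`t` map of the flow of a `C²` bounded vector field is continuous, for
`t ∈ (0, 1]`.  (Grönwall's inequality.) -/
lemma flow_time_map_continuous {E : Type*} [NormedAddCommGroup E] [NormedSpace ℝ E]
    [FiniteDimensional ℝ E]
    (F : E → E) (hF : ContDiff ℝ 2 F)
    {D : ℝ} (hD : ∀ x : E, ‖F x‖ ≤ D) (hD0 : 0 ≤ D)
    (f : ℝ → E → E)
    (hf0 : ∀ x : E, f 0 x = x)
    (hflow : ∀ t : ℝ, ∀ x : E, HasDerivAt (fun τ : ℝ => f τ x) (F (f t x)) t)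
    {t : ℝ} (ht : t ∈ Set.Ioc (0:ℝ) 1) : Continuous (f t) := by
  rw [continuous_iff_continuousAt]
  intro x₀
  -- Lipschitz constant of `F` on a large closed ball
  have hFd : Differentiable ℝ F := hF.differentiable (by norm_num)
  have hdFc : Continuous fun x => ‖fderiv ℝ F x‖ := (hF.continuous_fderiv (by norm_num)).norm
  have hball : IsCompact (Metric.closedBall x₀ (1 + D)) := isCompact_closedBall _ _
  have hx₀mem : x₀ ∈ Metric.closedBall x₀ (1 + D) :=
    Metric.mem_closedBall_self (by linarith)
  obtain ⟨z, hz, hzmax'⟩ := hball.exists_isMaxOn ⟨x₀, hx₀mem⟩ hdFc.continuousOn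
  have hzmax : ∀ x ∈ Metric.closedBall x₀ (1 + D), ‖fderiv ℝ F x‖ ≤ ‖fderiv ℝ F z‖ :=
    fun x hx => hzmax' hx
  set K : NNReal := ‖fderiv ℝ F z‖₊ with hK
  have hlip : LipschitzOnWith K F (Metric.closedBall x₀ (1 + D)) := by
    refine Convex.lipschitzOnWith_of_nnnorm_fderiv_le (fun x _ => hFd x) (fun x hx => ?_)
      (convex_closedBall _ _)
    exact_mod_cast hzmax x hx
  -- trajectories starting in the unit ball stay in the large ball up to time 1
  have mem_s : ∀ y ∈ Metric.closedBall x₀ 1, ∀ s ∈ Set.Ico (0:ℝ) t,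
      f s y ∈ Metric.closedBall x₀ (1 + D) := by
    intro y hy s hs
    have h1 : ‖f s y - y‖ ≤ D * ‖s‖ := flow_traj_bound F f hf0 hflow hD y s
    have hs0 : 0 ≤ s := hs.1
    have hs1 : s ≤ 1 := le_trans (le_of_lt hs.2) ht.2
    have hns : ‖s‖ ≤ 1 := by rw [Real.norm_eq_abs, abs_of_nonneg hs0]; exact hs1
    have hns0 : (0:ℝ) ≤ ‖s‖ := norm_nonneg _
    have h2 : dist (f s y) y ≤ D := by
      rw [dist_eq_norm]; nlinarith
    have h3 : dist y x₀ ≤ 1 := hy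
    calc dist (f s y) x₀ ≤ dist (f s y) y + dist y x₀ := dist_triangle _ _ _
      _ ≤ D + 1 := add_le_add h2 h3
      _ = 1 + D := by ring
  -- Grönwall estimate
  have key : ∀ y ∈ Metric.closedBall x₀ 1,
      dist (f t y) (f t x₀) ≤ dist y x₀ * Real.exp (K * t) := by
    intro y hy
    have trajc : ∀ w : E, ContinuousOn (fun τ : ℝ => f τ w) (Set.Icc 0 t) :=
      fun w τ _ => ((hflow τ w).differentiableAt.continuousAt).continuousWithinAt
    have h := dist_le_of_trajectories_ODE_of_mem
      (v := fun _ : ℝ => F) (s := fun _ : ℝ => Metric.closedBall x₀ (1 + D)) (K := K)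
      (f := fun τ => f τ y) (g := fun τ => f τ x₀) (a := 0) (b := t)
      (δ := dist y x₀)
      (fun _ _ => hlip) (trajc y)
      (fun τ _ => (hflow τ y).hasDerivWithinAt)
      (fun τ hτ => mem_s y hy τ hτ)
      (trajc x₀)
      (fun τ _ => (hflow τ x₀).hasDerivWithinAt)
      (fun τ hτ => mem_s x₀ (Metric.mem_closedBall_self one_pos.le) τ hτ)
      (by show dist (f 0 y) (f 0 x₀) ≤ dist y x₀; rw [hf0, hf0])
      t ⟨ht.1.le, le_rfl⟩
    simpa using h
  -- conclude continuity at x₀ by an ε-δ argument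
  rw [Metric.continuousAt_iff]
  intro ε hε
  set M : ℝ := Real.exp (K * t) with hM
  have hM0 : 0 < M := Real.exp_pos _
  refine ⟨min 1 (ε / (M + 1)), lt_min one_pos (by positivity), fun {y} hy => ?_⟩
  have hy1 : dist y x₀ ≤ 1 := le_of_lt (lt_of_lt_of_le hy (min_le_left _ _))
  have hy2 : dist y x₀ < ε / (M + 1) := lt_of_lt_of_le hy (min_le_right _ _)
  have h := key y hy1
  have : dist y x₀ * M < ε := by
    have h1 : dist y x₀ * (M + 1) < ε := by
      calc dist y x₀ * (M + 1) < (ε / (M + 1)) * (M + 1) :=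
            mul_lt_mul_of_pos_right hy2 (by positivity)
        _ = ε := by field_simp
    nlinarith [dist_nonneg (x := y) (y := x₀)]
  exact lt_of_le_of_lt h this

/-- Key lemma: integral of the derivative of a bounded `C¹` function along a bounded
vector field, against an invariant finite measure, vanishes. -/
lemma flow_integral_deriv_zero {E : Type*} [NormedAddCommGroup E] [NormedSpace ℝ E]
    [FiniteDimensional ℝ E] [MeasurableSpace E] [BorelSpace E]
    (F : E → E) (hF : ContDiff ℝ 2 F)
    (hFbdd : ∃ C : ℝ, ∀ x : E, ‖F x‖ ≤ C)
    (f : ℝ → E → E)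
    (hf0 : ∀ x : E, f 0 x = x)
    (hflow : ∀ t : ℝ, ∀ x : E, HasDerivAt (fun τ : ℝ => f τ x) (F (f t x)) t)
    (μ : Measure E) [IsFiniteMeasure μ]
    (hinv : ∀ t : ℝ, ∀ A : Set E, MeasurableSet A → μ (f t ⁻¹' A) = μ A)
    (g : E → ℝ) (hg : ContDiff ℝ 1 g)
    (hgbdd : ∃ C : ℝ, ∀ x : E, |g x| ≤ C)
    (hDgbdd : ∃ C : ℝ, ∀ x : E, ‖fderiv ℝ g x‖ ≤ C) :
    ∫ x, fderiv ℝ g x (F x) ∂μ = 0 := by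
  obtain ⟨C₀, hC₀⟩ := hFbdd
  obtain ⟨B₀, hB₀⟩ := hgbdd
  obtain ⟨L₀, hL₀⟩ := hDgbdd
  set D : ℝ := max C₀ 0 with hD
  set B : ℝ := max B₀ 0 with hB
  set L : ℝ := max L₀ 0 with hL
  have hDF : ∀ x, ‖F x‖ ≤ D := fun x => le_trans (hC₀ x) (le_max_left _ _)
  have hBg : ∀ x, |g x| ≤ B := fun x => le_trans (hB₀ x) (le_max_left _ _)
  have hLg : ∀ x, ‖fderiv ℝ g x‖ ≤ L := fun x => le_trans (hL₀ x) (le_max_left _ _)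
  have hD0 : 0 ≤ D := le_max_right _ _
  have hL0 : 0 ≤ L := le_max_right _ _
  have hgd : Differentiable ℝ g := hg.differentiable one_ne_zero
  have hgc : Continuous g := hg.continuous
  -- g is L-Lipschitz
  have hglip : ∀ a b : E, |g a - g b| ≤ L * ‖a - b‖ := by
    intro a b
    have := Convex.norm_image_sub_le_of_norm_fderiv_le (f := g) (s := Set.univ)
      (fun x _ => hgd x) (fun x _ => hLg x) convex_univ (Set.mem_univ b) (Set.mem_univ a)
    simpa [Real.norm_eq_abs] using this
  -- the sequence of times
  set u : ℕ → ℝ := fun n => 1 / (n + 1 : ℝ) with hu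
  have hupos : ∀ n, 0 < u n := fun n => by positivity
  have humem : ∀ n, u n ∈ Set.Ioc (0:ℝ) 1 := by
    intro n
    refine ⟨hupos n, ?_⟩
    rw [hu]
    rw [div_le_one (by positivity)]
    have : (0:ℝ) ≤ (n:ℝ) := Nat.cast_nonneg n
    linarith
  have hu0 : Filter.Tendsto u Filter.atTop (nhds 0) :=
    tendsto_one_div_add_atTop_nhds_zero_nat
  have hcont : ∀ n, Continuous (f (u n)) := fun n =>
    flow_time_map_continuous F hF hDF hD0 f hf0 hflow (humem n)
  -- invariance of the measure under the time-(u n) map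
  have hmap : ∀ n, μ.map (f (u n)) = μ := by
    intro n
    ext A hA
    rw [Measure.map_apply (hcont n).measurable hA, hinv]
    exact hA
  -- integrability of bounded continuous functions
  have int_of : ∀ (h : E → ℝ) (Bh : ℝ), Continuous h → (∀ x, |h x| ≤ Bh) → Integrable h μ := by
    intro h Bh hc hb
    exact ⟨hc.aestronglyMeasurable,
      HasFiniteIntegral.of_bounded (C := Bh) (ae_of_all _ (fun x => by
        simpa [Real.norm_eq_abs] using hb x))⟩
  have hgint : Integrable g μ := int_of g B hgc hBg
  have hgfint : ∀ n, Integrable (fun x => g (f (u n) x)) μ := fun n =>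
    int_of _ B (hgc.comp (hcont n)) (fun x => hBg _)
  -- pushforward identity
  have hpush : ∀ n, ∫ x, g (f (u n) x) ∂μ = ∫ x, g x ∂μ := by
    intro n
    calc ∫ x, g (f (u n) x) ∂μ = ∫ y, g y ∂(μ.map (f (u n))) :=
          (integral_map (hcont n).aemeasurable hgc.aestronglyMeasurable).symm
      _ = ∫ y, g y ∂μ := by rw [hmap n]
  -- each difference-quotient integral vanishes
  set G : ℕ → E → ℝ := fun n x => (g (f (u n) x) - g x) / u n with hG
  have hGcont : ∀ n, Continuous (G n) :=
    fun n => (((hgc.comp (hcont n)).sub hgc).div_const _)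
  have hzero : ∀ n, ∫ x, G n x ∂μ = 0 := by
    intro n
    rw [hG]
    simp only [div_eq_mul_inv]
    rw [integral_mul_const, integral_sub (hgfint n) hgint, hpush, sub_self, zero_mul]
  -- uniform bound on the difference quotients
  have hGbdd : ∀ n, ∀ x, |G n x| ≤ L * D := by
    intro n x
    have h1 : |g (f (u n) x) - g x| ≤ L * (D * u n) := by
      have h2 := hglip (f (u n) x) x
      have h3 : ‖f (u n) x - x‖ ≤ D * ‖u n‖ := flow_traj_bound F f hf0 hflow hDF x (u n)
      have h4 : ‖(u n : ℝ)‖ = u n := by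
        rw [Real.norm_eq_abs, abs_of_pos (hupos n)]
      rw [h4] at h3
      calc |g (f (u n) x) - g x| ≤ L * ‖f (u n) x - x‖ := h2
        _ ≤ L * (D * u n) := by nlinarith [norm_nonneg (f (u n) x - x)]
    rw [hG]
    simp only
    rw [abs_div, abs_of_pos (hupos n), div_le_iff₀ (hupos n)]
    calc |g (f (u n) x) - g x| ≤ L * (D * u n) := h1
      _ = L * D * u n := by ring
  -- pointwise convergence of the difference quotients
  have hptwise : ∀ x : E, Filter.Tendsto (fun n => G n x) Filter.atTop
      (nhds (fderiv ℝ g x (F x))) := by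
    intro x
    have h1 : HasDerivAt (fun τ : ℝ => f τ x) (F x) 0 := by
      have := hflow 0 x; rwa [hf0 x] at this
    have h2 : HasFDerivAt g (fderiv ℝ g x) x := (hgd x).hasFDerivAt
    have hd : HasDerivAt (fun τ : ℝ => g (f τ x)) (fderiv ℝ g x (F x)) 0 := by
      have h2' : HasFDerivAt g (fderiv ℝ g x) (f 0 x) := by rw [hf0 x]; exact h2
      have := h2'.comp_hasDerivAt 0 (hflow 0 x)
      simpa [hf0 x, Function.comp_def] using this
    rw [hasDerivAt_iff_tendsto_slope] at hd
    have hu0' : Filter.Tendsto u Filter.atTop (nhdsWithin 0 {(0:ℝ)}ᶜ) := by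
      refine tendsto_nhdsWithin_of_tendsto_nhds_of_eventually_within _ hu0 ?_
      exact Filter.Eventually.of_forall fun n => ne_of_gt (hupos n)
    have := hd.comp hu0'
    refine this.congr fun n => ?_
    simp only [Function.comp, slope_def_field, hf0 x, sub_zero, hG]
  -- dominated convergence
  have hDC := tendsto_integral_of_dominated_convergence (F := G)
    (f := fun x => fderiv ℝ g x (F x)) (bound := fun _ => L * D) (μ := μ)
    (fun n => (hGcont n).aestronglyMeasurable)
    (integrable_const _)
    (fun n => ae_of_all _ (fun x => by simpa [Real.norm_eq_abs] using hGbdd n x))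
    (ae_of_all _ hptwise)
  have hconst : Filter.Tendsto (fun n => ∫ x, G n x ∂μ) Filter.atTop (nhds 0) := by
    simpa [hzero] using (tendsto_const_nhds (x := (0:ℝ)) (f := Filter.atTop (α := ℕ)))
  exact (tendsto_nhds_unique hDC hconst)

/-- integration by parts along the flow direction.
If `F` is bounded, `μ` is a finite Borel measure invariant under the flow of `F`,
and `Φ η : E → ℝ` are C¹, bounded, with bounded derivatives, then
`∫ Φ(x) · Dη(x)(F x) dμ(x) = − ∫ η(x) · DΦ(x)(F x) dμ(x)`. -/
theorem equivariant_divergence_stmt7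
    {E : Type*} [NormedAddCommGroup E] [NormedSpace ℝ E] [FiniteDimensional ℝ E]
    [MeasurableSpace E] [BorelSpace E]
    (F : E → E) (hF : ContDiff ℝ 2 F)
    (hFbdd : ∃ C : ℝ, ∀ x : E, ‖F x‖ ≤ C)
    (f : ℝ → E → E)
    (hf0 : ∀ x : E, f 0 x = x)
    (hfadd : ∀ s t : ℝ, ∀ x : E, f (s + t) x = f s (f t x))
    (hflow : ∀ t : ℝ, ∀ x : E, HasDerivAt (fun τ : ℝ => f τ x) (F (f t x)) t)
    (μ : Measure E) [IsFiniteMeasure μ]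
    (hinv : ∀ t : ℝ, ∀ A : Set E, MeasurableSet A → μ (f t ⁻¹' A) = μ A)
    (Φ η : E → ℝ) (hΦ : ContDiff ℝ 1 Φ) (hη : ContDiff ℝ 1 η)
    (hΦbdd : ∃ C : ℝ, ∀ x : E, |Φ x| ≤ C)
    (hηbdd : ∃ C : ℝ, ∀ x : E, |η x| ≤ C)
    (hDΦbdd : ∃ C : ℝ, ∀ x : E, ‖fderiv ℝ Φ x‖ ≤ C)
    (hDηbdd : ∃ C : ℝ, ∀ x : E, ‖fderiv ℝ η x‖ ≤ C) :
    ∫ x, Φ x * fderiv ℝ η x (F x) ∂μ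
      = - ∫ x, η x * fderiv ℝ Φ x (F x) ∂μ := by
  obtain ⟨C₀, hC₀⟩ := hFbdd
  obtain ⟨CΦ₀, hCΦ₀⟩ := hΦbdd
  obtain ⟨Cη₀, hCη₀⟩ := hηbdd
  obtain ⟨LΦ₀, hLΦ₀⟩ := hDΦbdd
  obtain ⟨Lη₀, hLη₀⟩ := hDηbdd
  set D : ℝ := max C₀ 0
  set CΦ : ℝ := max CΦ₀ 0
  set Cη : ℝ := max Cη₀ 0
  set LΦ : ℝ := max LΦ₀ 0
  set Lη : ℝ := max Lη₀ 0
  have hDF : ∀ x, ‖F x‖ ≤ D := fun x => le_trans (hC₀ x) (le_max_left _ _)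
  have hCΦ : ∀ x, |Φ x| ≤ CΦ := fun x => le_trans (hCΦ₀ x) (le_max_left _ _)
  have hCη : ∀ x, |η x| ≤ Cη := fun x => le_trans (hCη₀ x) (le_max_left _ _)
  have hLΦ : ∀ x, ‖fderiv ℝ Φ x‖ ≤ LΦ := fun x => le_trans (hLΦ₀ x) (le_max_left _ _)
  have hLη : ∀ x, ‖fderiv ℝ η x‖ ≤ Lη := fun x => le_trans (hLη₀ x) (le_max_left _ _)
  have hΦd : Differentiable ℝ Φ := hΦ.differentiable one_ne_zero
  have hηd : Differentiable ℝ η := hη.differentiable one_ne_zero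
  -- the product
  set g : E → ℝ := fun x => Φ x * η x with hgdef
  have hg : ContDiff ℝ 1 g := hΦ.mul hη
  have hgbdd : ∃ C : ℝ, ∀ x : E, |g x| ≤ C := by
    refine ⟨CΦ * Cη, fun x => ?_⟩
    rw [hgdef]
    simp only
    rw [abs_mul]
    have h1 := hCΦ x
    have h2 := hCη x
    have h3 := abs_nonneg (Φ x)
    have h4 := abs_nonneg (η x)
    nlinarith
  have hfd : ∀ x, fderiv ℝ g x = Φ x • fderiv ℝ η x + η x • fderiv ℝ Φ x := by
    intro x
    rw [hgdef]
    exact fderiv_mul (hΦd x) (hηd x)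
  have hDgbdd : ∃ C : ℝ, ∀ x : E, ‖fderiv ℝ g x‖ ≤ C := by
    refine ⟨CΦ * Lη + Cη * LΦ, fun x => ?_⟩
    rw [hfd x]
    calc ‖Φ x • fderiv ℝ η x + η x • fderiv ℝ Φ x‖
        ≤ ‖Φ x • fderiv ℝ η x‖ + ‖η x • fderiv ℝ Φ x‖ := norm_add_le _ _
      _ = |Φ x| * ‖fderiv ℝ η x‖ + |η x| * ‖fderiv ℝ Φ x‖ := by
          rw [norm_smul, norm_smul, Real.norm_eq_abs, Real.norm_eq_abs]
      _ ≤ CΦ * Lη + Cη * LΦ := by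
          have := hCΦ x; have := hCη x; have := hLΦ x; have := hLη x
          have := abs_nonneg (Φ x); have := abs_nonneg (η x)
          have := norm_nonneg (fderiv ℝ η x); have := norm_nonneg (fderiv ℝ Φ x)
          nlinarith
  have hkey := flow_integral_deriv_zero F hF ⟨C₀, hC₀⟩ f hf0 hflow μ hinv g hg hgbdd hDgbdd
  -- rewrite the integrand
  have hsplit : ∀ x, fderiv ℝ g x (F x)
      = Φ x * fderiv ℝ η x (F x) + η x * fderiv ℝ Φ x (F x) := by
    intro x
    rw [hfd x]
    simp [smul_eq_mul]
  -- integrability of the two pieces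
  have hcontη : Continuous fun x => Φ x * fderiv ℝ η x (F x) :=
    hΦ.continuous.mul ((hη.continuous_fderiv one_ne_zero).clm_apply (hF.continuous))
  have hcontΦ : Continuous fun x => η x * fderiv ℝ Φ x (F x) :=
    hη.continuous.mul ((hΦ.continuous_fderiv one_ne_zero).clm_apply (hF.continuous))
  have int_of : ∀ (h : E → ℝ) (Bh : ℝ), Continuous h → (∀ x, |h x| ≤ Bh) → Integrable h μ := by
    intro h Bh hc hb
    exact ⟨hc.aestronglyMeasurable,
      HasFiniteIntegral.of_bounded (C := Bh) (ae_of_all _ (fun x => by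
        simpa [Real.norm_eq_abs] using hb x))⟩
  have hb1 : ∀ x, |Φ x * fderiv ℝ η x (F x)| ≤ CΦ * (Lη * D) := by
    intro x
    rw [abs_mul]
    have h1 := hCΦ x
    have h2 : |fderiv ℝ η x (F x)| ≤ Lη * D := by
      calc |fderiv ℝ η x (F x)| = ‖fderiv ℝ η x (F x)‖ := (Real.norm_eq_abs _).symm
        _ ≤ ‖fderiv ℝ η x‖ * ‖F x‖ := (fderiv ℝ η x).le_opNorm _
        _ ≤ Lη * D := by
            have := hLη x; have := hDF x
            have := norm_nonneg (fderiv ℝ η x); have := norm_nonneg (F x)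
            nlinarith
    have := abs_nonneg (Φ x); have := abs_nonneg (fderiv ℝ η x (F x))
    nlinarith
  have hb2 : ∀ x, |η x * fderiv ℝ Φ x (F x)| ≤ Cη * (LΦ * D) := by
    intro x
    rw [abs_mul]
    have h1 := hCη x
    have h2 : |fderiv ℝ Φ x (F x)| ≤ LΦ * D := by
      calc |fderiv ℝ Φ x (F x)| = ‖fderiv ℝ Φ x (F x)‖ := (Real.norm_eq_abs _).symm
        _ ≤ ‖fderiv ℝ Φ x‖ * ‖F x‖ := (fderiv ℝ Φ x).le_opNorm _
        _ ≤ LΦ * D := by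
            have := hLΦ x; have := hDF x
            have := norm_nonneg (fderiv ℝ Φ x); have := norm_nonneg (F x)
            nlinarith
    have := abs_nonneg (η x); have := abs_nonneg (fderiv ℝ Φ x (F x))
    nlinarith
  have hint1 : Integrable (fun x => Φ x * fderiv ℝ η x (F x)) μ :=
    int_of _ _ hcontη hb1
  have hint2 : Integrable (fun x => η x * fderiv ℝ Φ x (F x)) μ :=
    int_of _ _ hcontΦ hb2
  have : ∫ x, (Φ x * fderiv ℝ η x (F x) + η x * fderiv ℝ Φ x (F x)) ∂μ = 0 := by
    rw [← hkey]
    exact integral_congr_ae (ae_of_all _ fun x => (hsplit x).symm)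
  rw [integral_add hint1 hint2] at this
  linarith
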